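/- Let C > 0, let s ∈ M_r(ℂ) be Hermitian with operator norm ‖s‖ ≤ C, and let B ∈ M_r(ℂ) be arbitrary. Then the quantity Q := tr( exp(−s) · ( ∫₀¹ exp(τs)·B·exp((1−τ)s) dτ ) · B^† ) is a real number satisfying Q ≥ ((1 − e^{−2C})/(2C)) · tr(B·B^†) ≥ 0. (In the eigenbasis of s with eigenvalues λ_a, Q = Σ_{a,b} Ψ(λ_a,λ_b)|B_{ab}|²; this is the finite-dimensional coercivity estimate |D″s|²_{H₀} ≤ C̃·⟨Ψ(s)(D″s), D″s⟩_{H₀} used to derive the L²-bound on D″(log H₀⁻¹H) from the key identity.) -/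

import Mathlib

open Matrix NormedSpace intervalIntegral

attribute [local instance] Matrix.normedAddCommGroup Matrix.normedSpace

lemma exp_real_smul_herm {r : ℕ} (s : Matrix (Fin r) (Fin r) ℂ) (hs : s.IsHermitian) (t : ℝ) :
    exp (t • s) =
      (hs.eigenvectorUnitary : Matrix (Fin r) (Fin r) ℂ) *
        Matrix.diagonal (fun i => Complex.exp ((t * hs.eigenvalues i : ℝ) : ℂ)) *
        star (hs.eigenvectorUnitary : Matrix (Fin r) (Fin r) ℂ) := by
  set U : Matrix (Fin r) (Fin r) ℂ := (hs.eigenvectorUnitary : Matrix (Fin r) (Fin r) ℂ) with hU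
  have hUstar : star U * U = 1 := Unitary.coe_star_mul_self hs.eigenvectorUnitary
  have hUU : U * star U = 1 := Unitary.coe_mul_star_self hs.eigenvectorUnitary
  have hinv : U⁻¹ = star U := Matrix.inv_eq_left_inv hUstar
  have h1 : t • s = U * Matrix.diagonal (fun i => ((t * hs.eigenvalues i : ℝ) : ℂ)) * U⁻¹ := by
    rw [hinv]
    conv_lhs => rw [hs.spectral_theorem, Unitary.conjStarAlgAut_apply]
    rw [← smul_mul_assoc, ← mul_smul_comm]
    congr 2
    ext i j
    by_cases h : i = j <;>
      simp [Matrix.diagonal_apply, h, Complex.real_smul]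
  rw [h1, Matrix.exp_conj U _ ⟨Unitary.toUnits hs.eigenvectorUnitary, rfl⟩, Matrix.exp_diagonal,
    hinv]
  congr 1
  congr 1
  rw [Pi.exp_def]
  funext i
  rw [← Complex.exp_eq_exp_ℂ]

lemma trace_mul_conjT {r : ℕ} (A M : Matrix (Fin r) (Fin r) ℂ) :
    Matrix.trace (A * Mᴴ) = ∑ a, ∑ b, A a b * star (M a b) := by
  simp [Matrix.trace, Matrix.mul_apply]

lemma trace_diag_mul_diag_mul {r : ℕ} (u v : Fin r → ℂ) (M : Matrix (Fin r) (Fin r) ℂ) :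
    Matrix.trace (Matrix.diagonal u * M * Matrix.diagonal v * Mᴴ)
      = ∑ a, ∑ b, u a * M a b * v b * star (M a b) := by
  rw [trace_mul_conjT]
  refine Finset.sum_congr rfl fun a _ => Finset.sum_congr rfl fun b _ => ?_
  rw [Matrix.mul_diagonal, Matrix.diagonal_mul]

/-- **Finite-dimensional coercivity estimate `|D″s|² ≤ C̃·⟨Ψ(s)(D″s), D″s⟩` (Section 4/5).**
Let `s` be Hermitian with operator norm (equivalently, all eigenvalues in absolute
value) at most `C`, and `B` arbitrary. Then
`Q = tr(exp(−s)·(∫₀¹ exp(τs)·B·exp((1−τ)s) dτ)·B†)` is a real number with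
`Q ≥ ((1 − e^{−2C})/(2C))·tr(B·B†) ≥ 0`. -/
theorem coercivity_of_Psi
    {r : ℕ} (C : ℝ) (hC : 0 < C)
    (s B : Matrix (Fin r) (Fin r) ℂ) (hs : s.IsHermitian)
    (hbound : ∀ i, |hs.eigenvalues i| ≤ C) :
    (Matrix.trace
        (exp (-s) * (∫ τ in (0:ℝ)..1, exp (τ • s) * B * exp ((1 - τ) • s)) * Bᴴ)).im
      = 0 ∧
    ((1 - Real.exp (-(2 * C))) / (2 * C)) * (Matrix.trace (B * Bᴴ)).re ≤
      (Matrix.trace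
        (exp (-s) * (∫ τ in (0:ℝ)..1, exp (τ • s) * B * exp ((1 - τ) • s)) * Bᴴ)).re ∧
    0 ≤ ((1 - Real.exp (-(2 * C))) / (2 * C)) * (Matrix.trace (B * Bᴴ)).re := by
  classical
  set U : Matrix (Fin r) (Fin r) ℂ := (hs.eigenvectorUnitary : Matrix (Fin r) (Fin r) ℂ) with hU
  set lam : Fin r → ℝ := hs.eigenvalues with hlam
  have hUstar : star U * U = 1 := Unitary.coe_star_mul_self hs.eigenvectorUnitary
  have hUU : U * star U = 1 := Unitary.coe_mul_star_self hs.eigenvectorUnitary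
  have hUstar' : Uᴴ * U = 1 := hUstar
  have hUU' : U * Uᴴ = 1 := hUU
  have cancel1 : ∀ X : Matrix (Fin r) (Fin r) ℂ, star U * (U * X) = X := fun X => by
    rw [← mul_assoc, hUstar, one_mul]
  have cancel2 : ∀ X : Matrix (Fin r) (Fin r) ℂ, U * (star U * X) = X := fun X => by
    rw [← mul_assoc, hUU, one_mul]
  have cancel1' : ∀ X : Matrix (Fin r) (Fin r) ℂ, Uᴴ * (U * X) = X := cancel1
  have cancel2' : ∀ X : Matrix (Fin r) (Fin r) ℂ, U * (Uᴴ * X) = X := cancel2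
  set B' : Matrix (Fin r) (Fin r) ℂ := star U * B * U with hB'
  -- the scalar integrand
  set q : ℝ → ℝ := fun τ =>
    ∑ a, ∑ b, Real.exp ((1 - τ) * (lam b - lam a)) * Complex.normSq (B' a b) with hq
  set f : ℝ → Matrix (Fin r) (Fin r) ℂ :=
    fun τ => exp (τ • s) * B * exp ((1 - τ) • s) with hf
  -- pointwise computation of the trace
  have key : ∀ τ : ℝ, Matrix.trace (exp (-s) * f τ * Bᴴ) = ((q τ : ℝ) : ℂ) := by
    intro τ
    have hneg : exp (-s)
        = U * Matrix.diagonal (fun i => Complex.exp (((-1) * lam i : ℝ) : ℂ)) * star U := by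
      rw [← neg_one_smul ℝ s]; exact exp_real_smul_herm s hs (-1)
    have hmm : exp (-s) * f τ * Bᴴ
        = U * ((Matrix.diagonal (fun i => Complex.exp (((-1) * lam i : ℝ) : ℂ))
              * Matrix.diagonal (fun i => Complex.exp ((τ * lam i : ℝ) : ℂ)))
            * B' * Matrix.diagonal (fun i => Complex.exp (((1 - τ) * lam i : ℝ) : ℂ)) * B'ᴴ)
          * star U := by
      simp only [hf]
      rw [hneg, exp_real_smul_herm s hs τ, exp_real_smul_herm s hs (1 - τ), hB']
      simp only [← hU, ← hlam]
      simp only [conjTranspose_mul, conjTranspose_conjTranspose,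
        Matrix.star_eq_conjTranspose]
      simp only [mul_assoc, cancel1', cancel2', hUU', hUstar', mul_one, one_mul]
    rw [hmm, Matrix.trace_mul_cycle, hUstar, one_mul, Matrix.diagonal_mul_diagonal,
      trace_diag_mul_diag_mul]
    have hcast : ((q τ : ℝ) : ℂ)
        = ∑ a, ∑ b, ((Real.exp ((1 - τ) * (lam b - lam a)) : ℝ) : ℂ)
            * ((Complex.normSq (B' a b) : ℝ) : ℂ) := by
      simp only [hq, Complex.ofReal_sum, Complex.ofReal_mul]
    rw [hcast]
    refine Finset.sum_congr rfl fun a _ => Finset.sum_congr rfl fun b _ => ?_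
    have hsq : B' a b * star (B' a b) = ((Complex.normSq (B' a b) : ℝ) : ℂ) := by
      rw [← starRingEnd_apply]; exact Complex.mul_conj _
    calc Complex.exp (((-1) * lam a : ℝ) : ℂ) * Complex.exp ((τ * lam a : ℝ) : ℂ) * B' a b
          * Complex.exp (((1 - τ) * lam b : ℝ) : ℂ) * star (B' a b)
        = Complex.exp (((-1) * lam a : ℝ) : ℂ) * Complex.exp ((τ * lam a : ℝ) : ℂ)
            * Complex.exp (((1 - τ) * lam b : ℝ) : ℂ) * (B' a b * star (B' a b)) := by ring
      _ = ((Real.exp ((-1) * lam a) : ℝ) : ℂ) * ((Real.exp (τ * lam a) : ℝ) : ℂ)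
            * ((Real.exp ((1 - τ) * lam b) : ℝ) : ℂ) * ((Complex.normSq (B' a b) : ℝ) : ℂ) := by
          rw [Complex.ofReal_exp, Complex.ofReal_exp, Complex.ofReal_exp, hsq]
      _ = ((Real.exp ((-1) * lam a + τ * lam a + (1 - τ) * lam b) : ℝ) : ℂ)
            * ((Complex.normSq (B' a b) : ℝ) : ℂ) := by
          rw [Real.exp_add, Real.exp_add]; push_cast; ring
      _ = ((Real.exp ((1 - τ) * (lam b - lam a)) : ℝ) : ℂ)
            * ((Complex.normSq (B' a b) : ℝ) : ℂ) := by
          rw [show (-1) * lam a + τ * lam a + (1 - τ) * lam b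
              = (1 - τ) * (lam b - lam a) from by ring]
  -- continuity / integrability
  have hfc : Continuous f := by
    have hfe : f = fun τ =>
        U * Matrix.diagonal (fun i => Complex.exp ((τ * lam i : ℝ) : ℂ)) * star U * B *
          (U * Matrix.diagonal (fun i => Complex.exp (((1 - τ) * lam i : ℝ) : ℂ)) * star U) := by
      funext τ
      simp only [hf]
      rw [exp_real_smul_herm s hs τ, exp_real_smul_herm s hs (1 - τ)]
    rw [hfe]
    have h1 : Continuous fun τ : ℝ =>
        Matrix.diagonal (fun i => Complex.exp ((τ * lam i : ℝ) : ℂ)) :=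
      Continuous.matrix_diagonal (by fun_prop)
    have h2 : Continuous fun τ : ℝ =>
        Matrix.diagonal (fun i => Complex.exp (((1 - τ) * lam i : ℝ) : ℂ)) :=
      Continuous.matrix_diagonal (by fun_prop)
    exact ((((continuous_const.matrix_mul h1).matrix_mul continuous_const).matrix_mul
      continuous_const).matrix_mul (((continuous_const.matrix_mul h2).matrix_mul
      continuous_const)))
  letI : ENormedAddMonoid (Matrix (Fin r) (Fin r) ℂ) :=
    NormedAddCommGroup.toENormedAddCommMonoid.toENormedAddMonoid
  have hint : IntervalIntegrable f MeasureTheory.volume 0 1 :=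
    hfc.intervalIntegrable 0 1
  -- swap trace and integral
  let L : Matrix (Fin r) (Fin r) ℂ →ₗ[ℂ] ℂ :=
    { toFun := fun M => Matrix.trace (exp (-s) * M * Bᴴ)
      map_add' := fun x y => by simp [mul_add, add_mul]
      map_smul' := fun c x => by simp [mul_smul_comm, smul_mul_assoc] }
  have hQ : Matrix.trace (exp (-s) * (∫ τ in (0:ℝ)..1, f τ) * Bᴴ)
      = ∫ τ in (0:ℝ)..1, Matrix.trace (exp (-s) * f τ * Bᴴ) :=
    (L.toContinuousLinearMap.intervalIntegral_comp_comm hint).symm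
  have hQ2 : Matrix.trace (exp (-s) * (∫ τ in (0:ℝ)..1, f τ) * Bᴴ)
      = (((∫ τ in (0:ℝ)..1, q τ) : ℝ) : ℂ) := by
    rw [hQ]
    rw [intervalIntegral.integral_congr (g := fun τ => ((q τ : ℝ) : ℂ))
      (fun τ _ => key τ)]
    exact intervalIntegral.integral_ofReal
  -- continuity of q
  have hqc : Continuous q := by
    rw [hq]
    refine continuous_finset_sum _ fun a _ => continuous_finset_sum _ fun b _ => ?_
    fun_prop
  -- T = total square norm
  set T : ℝ := ∑ a, ∑ b, Complex.normSq (B' a b) with hT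
  have hTnonneg : 0 ≤ T :=
    Finset.sum_nonneg fun a _ => Finset.sum_nonneg fun b _ => Complex.normSq_nonneg _
  -- T equals re of trace (B * Bᴴ)
  have hTtrace : (Matrix.trace (B * Bᴴ)).re = T := by
    have h1 : B' * B'ᴴ = star U * (B * Bᴴ) * U := by
      rw [hB']
      simp only [conjTranspose_mul, conjTranspose_conjTranspose, Matrix.star_eq_conjTranspose]
      simp only [mul_assoc, cancel1', cancel2']
    have h2 : Matrix.trace (B' * B'ᴴ) = Matrix.trace (B * Bᴴ) := by
      rw [h1, Matrix.trace_mul_cycle, ← mul_assoc, hUU, one_mul]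
    have h3 : Matrix.trace (B' * B'ᴴ) = ((T : ℝ) : ℂ) := by
      rw [trace_mul_conjT]
      have : ∀ a b : Fin r, B' a b * star (B' a b) = ((Complex.normSq (B' a b) : ℝ) : ℂ) :=
        fun a b => by rw [← starRingEnd_apply]; exact Complex.mul_conj _
      simp only [this, hT, Complex.ofReal_sum]
    rw [← h2, h3, Complex.ofReal_re]
  -- lower bound for the integral
  set κ : ℝ := (1 - Real.exp (-(2 * C))) / (2 * C) with hκ
  have hexp_int : (∫ τ in (0:ℝ)..1, Real.exp (2 * C * τ + -(2 * C))) = κ := by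
    rw [intervalIntegral.integral_comp_mul_add Real.exp (by positivity : (2*C) ≠ 0) (-(2*C)),
      integral_exp]
    rw [hκ, smul_eq_mul]
    rw [show 2 * C * 1 + -(2 * C) = 0 from by ring, show 2 * C * 0 + -(2 * C) = -(2*C) from by ring,
      Real.exp_zero]
    field_simp
  have hg_le : ∀ τ ∈ Set.Icc (0:ℝ) 1, Real.exp (2 * C * τ + -(2 * C)) * T ≤ q τ := by
    intro τ hτ
    simp only [hq, hT, Finset.mul_sum]
    refine Finset.sum_le_sum fun a _ => Finset.sum_le_sum fun b _ => ?_
    refine mul_le_mul_of_nonneg_right (Real.exp_le_exp.2 ?_) (Complex.normSq_nonneg _)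
    rw [show 2 * C * τ + -(2 * C) = (1 - τ) * (-(2 * C)) from by ring]
    have ha := abs_le.1 (hbound a)
    have hb := abs_le.1 (hbound b)
    have h2 : -(2 * C) ≤ lam b - lam a := by linarith [ha.2, hb.1]
    exact mul_le_mul_of_nonneg_left h2 (by linarith [hτ.2])
  have hmono : κ * T ≤ ∫ τ in (0:ℝ)..1, q τ := by
    have hgint : IntervalIntegrable (fun τ => Real.exp (2 * C * τ + -(2 * C)) * T)
        MeasureTheory.volume 0 1 := (by fun_prop : Continuous _).intervalIntegrable 0 1
    have hqint : IntervalIntegrable q MeasureTheory.volume 0 1 :=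
      hqc.intervalIntegrable 0 1
    calc κ * T = (∫ τ in (0:ℝ)..1, Real.exp (2 * C * τ + -(2 * C))) * T := by rw [hexp_int]
      _ = ∫ τ in (0:ℝ)..1, Real.exp (2 * C * τ + -(2 * C)) * T := by
          rw [intervalIntegral.integral_mul_const]
      _ ≤ ∫ τ in (0:ℝ)..1, q τ :=
          intervalIntegral.integral_mono_on (by norm_num) hgint hqint hg_le
  have hκnonneg : 0 ≤ κ := by
    have h1 : Real.exp (-(2 * C)) ≤ 1 := by
      rw [← Real.exp_zero]
      exact Real.exp_le_exp.2 (by linarith)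
    rw [hκ]
    exact div_nonneg (by linarith) (by linarith)
  refine ⟨?_, ?_, ?_⟩
  · rw [hQ2]; exact Complex.ofReal_im _
  · rw [hQ2, Complex.ofReal_re, hTtrace]
    exact hmono
  · rw [hTtrace]
    exact mul_nonneg hκnonneg hTnonneg
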